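/- Let n = 2^m, let H be the extended Hamming code of length n, let P = H_β^0 be an even coset and Q = H_{β'}^1 an odd coset of (possibly different) extended Hamming codes. For each p ∈ P let q(p) ∈ Q be the unique word of Q at Hamming distance 1 from p, and let r(p) ∈ X^n be the word with * in the coordinate where p and q(p) differ, agreeing with p elsewhere. Then the code R(P,Q) = { r(p) : p ∈ P } ⊆ X^n has minimum Hamming distance at least 3. -/

import Mathlib

/-- Binary words of length `n`. -/
abbrev BW (n : ℕ) := Fin n → ZMod 2

/-- Ternary words of length `n` over `{0,1,*}`, with `none` playing the role of `*`. -/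
abbrev TW (n : ℕ) := Fin n → Option (ZMod 2)

/-- The coset of an extended Hamming code determined by the enumeration `α` of `F^m`,
the parity `ε` and the syndrome `β`:
`{ x ∈ F^n : Σ x_i = ε, Σ x_i α_i = β }`. -/
def coset {n m : ℕ} (α : Fin n → BW m) (ε : ZMod 2) (β : BW m) : Set (BW n) :=
  {x | (∑ i, x i) = ε ∧ (∑ i, x i • α i) = β}

/-- `r(p)` for an edge `{p, q}`: the ternary word with `*` where `p` and `q` differ,
agreeing with `p` elsewhere. -/
def rword {n : ℕ} (p q : BW n) : TW n := fun i => if p i = q i then some (p i) else none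

open Finset

lemma zmod2_add_eq_one : ∀ {a b : ZMod 2}, a ≠ b → a + b = 1 := by decide

lemma zmod2_add_self : ∀ a : ZMod 2, a + a = 0 := by decide

lemma mindist4 {n m : ℕ} (α : Fin n → BW m) (hα : Function.Injective α)
    (β : BW m) {x y : BW n} (hx : x ∈ coset α 0 β) (hy : y ∈ coset α 0 β)
    (hxy : x ≠ y) : 4 ≤ #{i | x i ≠ y i} := by
  set D : Finset (Fin n) := {i | x i ≠ y i} with hD
  have hmem : ∀ i, i ∈ D ↔ x i ≠ y i := by intro i; simp [hD]
  -- sum of differences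
  have hsum : ∀ i, x i + y i = if i ∈ D then 1 else 0 := by
    intro i
    by_cases h : i ∈ D
    · simp [h, zmod2_add_eq_one ((hmem i).1 h)]
    · have : x i = y i := not_not.mp (fun hc => h ((hmem i).2 hc))
      simp [h, this, zmod2_add_self]
  -- parity
  have hpar : (D.card : ZMod 2) = 0 := by
    have h1 : (∑ i, (x i + y i)) = 0 := by
      rw [Finset.sum_add_distrib, hx.1, hy.1, add_zero]
    calc (D.card : ZMod 2) = ∑ i ∈ D, (1 : ZMod 2) := by simp
      _ = ∑ i ∈ D, (x i + y i) := Finset.sum_congr rfl fun i hi => by rw [hsum i, if_pos hi]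
      _ = ∑ i, (x i + y i) := by
            refine Finset.sum_subset (Finset.subset_univ D) fun i _ hi => ?_
            rw [hsum i, if_neg hi]
      _ = 0 := h1
  have heven : 2 ∣ D.card := by
    rwa [ZMod.natCast_eq_zero_iff] at hpar
  have hne : D.Nonempty := by
    obtain ⟨i, hi⟩ := Function.ne_iff.mp hxy
    exact ⟨i, (hmem i).2 hi⟩
  -- syndrome
  have hsyn : (∑ i ∈ D, α i) = 0 := by
    have h1 : (∑ i, (x i + y i) • α i) = 0 := by
      have : (∑ i, (x i + y i) • α i) = (∑ i, x i • α i) + (∑ i, y i • α i) := by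
        rw [← Finset.sum_add_distrib]; exact Finset.sum_congr rfl fun i _ => add_smul _ _ _
      rw [this, hx.2, hy.2]
      funext j; exact zmod2_add_self (β j)
    calc (∑ i ∈ D, α i) = ∑ i ∈ D, (x i + y i) • α i := by
            refine Finset.sum_congr rfl fun i hi => ?_
            rw [hsum i, if_pos hi, one_smul]
      _ = ∑ i, (x i + y i) • α i := by
            refine Finset.sum_subset (Finset.subset_univ D) fun i _ hi => ?_
            rw [hsum i, if_neg hi, zero_smul]
      _ = 0 := h1
  -- card ≠ 2
  have hne2 : D.card ≠ 2 := by
    intro h2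
    obtain ⟨a, b, hab, hDab⟩ := Finset.card_eq_two.mp h2
    rw [hDab, Finset.sum_pair hab] at hsyn
    have : α a = α b := by
      funext j
      have := congrFun hsyn j
      simp only [Pi.add_apply, Pi.zero_apply] at this
      revert this; generalize α a j = u; generalize α b j = v; revert v; revert u; exact (by decide : ∀ u v : ZMod 2, u + v = 0 → u = v)
    exact hab (hα this)
  have := Finset.card_pos.mpr hne
  omega

/-- let `n = 2^m`, `P = H^0_β` an even coset and `Q = H^1_{β'}` an odd coset
of (possibly different) extended Hamming codes, and for `p ∈ P` let `q p ∈ Q` be at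
Hamming distance 1 from `p`.  Then the code `R(P,Q) = { r(p) : p ∈ P } ⊆ X^n` has
minimum Hamming distance at least 3. -/
theorem stmt8 {m : ℕ} (hm : 2 ≤ m) (n : ℕ) (hn : n = 2 ^ m)
    (α α' : Fin n → BW m) (hα : Function.Bijective α) (hα' : Function.Bijective α')
    (β β' : BW m)
    (q : BW n → BW n)
    (hq : ∀ p ∈ coset α 0 β, q p ∈ coset α' 1 β' ∧ hammingDist p (q p) = 1) :
    ∀ p ∈ coset α 0 β, ∀ p' ∈ coset α 0 β,
      rword p (q p) ≠ rword p' (q p') →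
        3 ≤ hammingDist (rword p (q p)) (rword p' (q p')) := by
  intro p hp p' hp' hne
  obtain ⟨-, hqd⟩ := hq p hp
  obtain ⟨-, hqd'⟩ := hq p' hp'
  have hpp' : p ≠ p' := by rintro rfl; exact hne rfl
  have hD4 : 4 ≤ #{j | p j ≠ p' j} := mindist4 α hα.injective β hp hp' hpp'
  unfold hammingDist at hqd hqd' ⊢
  obtain ⟨i, hi⟩ := Finset.card_eq_one.mp hqd
  obtain ⟨i', hi'⟩ := Finset.card_eq_one.mp hqd'
  have hpi : ∀ j, p j ≠ q p j ↔ j = i := by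
    intro j; rw [← Finset.mem_singleton, ← hi]; simp
  have hpi' : ∀ j, p' j ≠ q p' j ↔ j = i' := by
    intro j; rw [← Finset.mem_singleton, ← hi']; simp
  set D : Finset (Fin n) := {j | p j ≠ p' j} with hDdef
  set E : Finset (Fin n) := {j | rword p (q p) j ≠ rword p' (q p') j} with hEdef
  have hsub : D \ {i, i'} ⊆ E := by
    intro j hj
    simp only [hDdef, hEdef, mem_sdiff, mem_filter, mem_insert, mem_singleton] at hj ⊢
    obtain ⟨⟨-, hpj⟩, hji⟩ := hj
    push_neg at hji
    have h1 : p j = q p j := not_not.mp fun h => hji.1 ((hpi j).1 h)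
    have h2 : p' j = q p' j := not_not.mp fun h => hji.2 ((hpi' j).1 h)
    refine ⟨mem_univ j, ?_⟩
    simp only [rword, if_pos h1, if_pos h2]
    exact fun h => hpj (Option.some.inj h)
  have hcard_sdiff : D.card ≤ (D \ {i, i'}).card + ({i, i'} : Finset (Fin n)).card :=
    Finset.card_le_card_sdiff_add_card
  by_cases hii : i = i'
  · have h1 : ({i, i'} : Finset (Fin n)).card = 1 := by subst hii; simp
    have := Finset.card_le_card hsub
    omega
  · have hiE : i ∈ E := by
      simp only [hEdef, mem_filter]
      refine ⟨mem_univ i, ?_⟩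
      have h1 : p i ≠ q p i := (hpi i).2 rfl
      have h2 : p' i = q p' i := not_not.mp fun h => hii ((hpi' i).1 h)
      simp [rword, if_neg h1, if_pos h2]
    have hiE' : i' ∈ E := by
      simp only [hEdef, mem_filter]
      refine ⟨mem_univ i', ?_⟩
      have h1 : p' i' ≠ q p' i' := (hpi' i').2 rfl
      have h2 : p i' = q p i' := not_not.mp fun h => hii ((hpi i').1 h).symm
      simp [rword, if_pos h2, if_neg h1]
    have hsub2 : (D \ {i, i'}) ∪ {i, i'} ⊆ E := by
      intro j hj
      rcases Finset.mem_union.mp hj with h | h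
      · exact hsub h
      · rcases Finset.mem_insert.mp h with rfl | h
        · exact hiE
        · rw [Finset.mem_singleton.mp h]; exact hiE'
    have hdisj : Disjoint (D \ ({i, i'} : Finset (Fin n))) {i, i'} := Finset.sdiff_disjoint
    have hcu : ((D \ {i, i'}) ∪ ({i, i'} : Finset (Fin n))).card
        = (D \ {i, i'}).card + ({i, i'} : Finset (Fin n)).card :=
      Finset.card_union_of_disjoint hdisj
    have hc2 : ({i, i'} : Finset (Fin n)).card = 2 := Finset.card_pair hii
    rw [hc2] at hcard_sdiff
    have := Finset.card_le_card hsub2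
    omega
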